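/- arXiv:1404.7316 — 5 statements merged into one kernel-verified Lean document; each statement's English description precedes it below -/
import Mathlib

section
/- Let K be a field of characteristic different from 2, let k ≥ 1 be an integer, let c ∈ K with c ≠ 0, and let λ_1, …, λ_k ∈ K. Then the local system of equations Σ_{j=i}^{k} λ_j·λ_{k+i−j} + 2c·λ_i = 0 for all i = 1, …, k holds if and only if either λ_i = 0 for all i = 1, …, k, or λ_k = −2c and λ_i = 0 for all i = 1, …, k−1. -/
/-- Case 1 (`c ≠ 0`) of the local computation in the proof of the main theorem:
for a field `K` of characteristic `≠ 2`, `k ≥ 1`, `c ≠ 0` and `λ_1, …, λ_k ∈ K`,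
the local system of equations `∑_{j=i}^{k} λ_j λ_{k+i-j} + 2 c λ_i = 0` (for
`i = 1, …, k`) holds iff either all `λ_i = 0`, or `λ_k = -2c` and `λ_i = 0` for
`i = 1, …, k-1`. -/
theorem stmt0 (K : Type*) [Field K] (hchar : (2 : K) ≠ 0)
    (k : ℕ) (hk : 1 ≤ k) (c : K) (hc : c ≠ 0) (l : ℕ → K) :
    (∀ i ∈ Finset.Icc 1 k,
        (∑ j ∈ Finset.Icc i k, l j * l (k + i - j)) + 2 * c * l i = 0) ↔
      ((∀ i ∈ Finset.Icc 1 k, l i = 0) ∨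
        (l k = -2 * c ∧ ∀ i ∈ Finset.Icc 1 (k - 1), l i = 0)) := by
  have h2c : (2 : K) * c ≠ 0 := mul_ne_zero hchar hc
  constructor
  · intro h
    have hkk := h k (by simp [Finset.mem_Icc, hk])
    rw [Finset.Icc_self, Finset.sum_singleton] at hkk
    have hkidx : k + k - k = k := by omega
    rw [hkidx] at hkk
    have hfac : l k * (l k + 2 * c) = 0 := by linear_combination hkk
    have hdisj := mul_eq_zero.mp hfac
    have hne : 2 * l k + 2 * c ≠ 0 := by
      rcases hdisj with h0 | h0
      · rw [h0]; simpa using h2c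
      · have hlk : l k = -(2 * c) := by linear_combination h0
        rw [hlk]; intro hcon; apply h2c; linear_combination -hcon
    have key : ∀ n i, 1 ≤ i → i < k → k - i ≤ n → l i = 0 := by
      intro n
      induction n with
      | zero => intro i h1 h2 h3; omega
      | succ n ih =>
        intro i h1 h2 h3
        have hz : ∀ j, i < j → j < k → l j = 0 := fun j hj1 hj2 =>
          ih j (by omega) hj2 (by omega)
        have heq := h i (by simp [Finset.mem_Icc]; omega)
        have hsum : (∑ j ∈ Finset.Icc i k, l j * l (k + i - j))
            = l i * l (k + i - i) + l k * l (k + i - k) := by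
          apply Finset.sum_eq_add_of_mem i k
            (by simp [Finset.mem_Icc]; omega) (by simp [Finset.mem_Icc]; omega)
            (by omega)
          intro j hj hj'
          simp only [Finset.mem_Icc] at hj
          rw [hz j (by omega) (by omega), zero_mul]
        have hi1 : k + i - i = k := by omega
        have hi2 : k + i - k = i := by omega
        rw [hsum, hi1, hi2] at heq
        have : l i * (2 * l k + 2 * c) = 0 := by linear_combination heq
        rcases mul_eq_zero.mp this with h0 | h0
        · exact h0
        · exact absurd h0 hne
    rcases hdisj with h0 | h0
    · left
      intro i hi
      simp only [Finset.mem_Icc] at hi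
      rcases eq_or_lt_of_le hi.2 with he | hlt
      · rw [he]; exact h0
      · exact key k i hi.1 hlt (by omega)
    · right
      constructor
      · linear_combination h0
      · intro i hi
        simp only [Finset.mem_Icc] at hi
        exact key k i hi.1 (by omega) (by omega)
  · intro h i hi
    simp only [Finset.mem_Icc] at hi
    rcases h with hz | ⟨hlk, hz⟩
    · have hzi : l i = 0 := hz i (by simp [Finset.mem_Icc]; omega)
      have : (∑ j ∈ Finset.Icc i k, l j * l (k + i - j)) = 0 := by
        apply Finset.sum_eq_zero
        intro j hj
        simp only [Finset.mem_Icc] at hj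
        rw [hz j (by simp [Finset.mem_Icc]; omega), zero_mul]
      rw [this, hzi]; ring
    · rcases eq_or_lt_of_le hi.2 with he | hlt
      · subst he
        rw [Finset.Icc_self, Finset.sum_singleton]
        have : i + i - i = i := by omega
        rw [this, hlk]; ring
      · have hzi : l i = 0 := hz i (by simp [Finset.mem_Icc]; omega)
        have : (∑ j ∈ Finset.Icc i k, l j * l (k + i - j)) = 0 := by
          apply Finset.sum_eq_zero
          intro j hj
          simp only [Finset.mem_Icc] at hj
          rcases eq_or_lt_of_le hj.2 with he | hlt'
          · have h1 : k + i - j = i := by omega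
            rw [h1, hzi, mul_zero]
          · rw [hz j (by simp [Finset.mem_Icc]; omega), zero_mul]
        rw [this, hzi]; ring
end

section
/- Let K be a field, let k ≥ 1 be an integer, and let λ_1, …, λ_k ∈ K. Then the local system of equations with c = 0, namely Σ_{j=i}^{k} λ_j·λ_{k+i−j} = 0 for all i = 1, …, k, holds if and only if λ_i = 0 for all i with ⌊k/2⌋ < i ≤ k (equivalently, only λ_1, …, λ_{⌊k/2⌋} may be nonzero, and these may be arbitrary). -/
/-- Case 2 (`c = 0`) of the local computation in the proof of the main theorem:
for a field `K`, `k ≥ 1` and `λ_1, …, λ_k ∈ K`, the local system of equations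
with `c = 0`, namely `∑_{j=i}^{k} λ_j λ_{k+i-j} = 0` for `i = 1, …, k`, holds
iff `λ_i = 0` for all `i` with `⌊k/2⌋ < i ≤ k`. -/
theorem stmt1 (K : Type*) [Field K] (k : ℕ) (hk : 1 ≤ k) (l : ℕ → K) :
    (∀ i ∈ Finset.Icc 1 k, (∑ j ∈ Finset.Icc i k, l j * l (k + i - j)) = 0) ↔
      (∀ i, k / 2 < i → i ≤ k → l i = 0) := by
  constructor
  · intro hL
    have key : ∀ d m, k - m = d → k / 2 < m → m ≤ k → l m = 0 := by
      intro d
      induction d using Nat.strong_induction_on with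
      | _ d ih =>
        intro m hd h1 h2
        have h := hL (2 * m - k) (Finset.mem_Icc.mpr ⟨by omega, by omega⟩)
        have hsum : ∑ j ∈ Finset.Icc (2 * m - k) k, l j * l (k + (2 * m - k) - j)
            = l m * l m := by
          rw [Finset.sum_eq_single m]
          · have hm : k + (2 * m - k) - m = m := by omega
            rw [hm]
          · intro j hj hne
            rw [Finset.mem_Icc] at hj
            rcases lt_or_gt_of_ne hne with hlt | hgt
            · have hz : l (k + (2 * m - k) - j) = 0 :=
                ih (k - (k + (2 * m - k) - j)) (by omega) _ rfl (by omega) (by omega)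
              rw [hz, mul_zero]
            · have hz : l j = 0 := ih (k - j) (by omega) _ rfl (by omega) (by omega)
              rw [hz, zero_mul]
          · intro hm
            exact absurd (Finset.mem_Icc.mpr ⟨by omega, h2⟩) hm
        rw [hsum] at h
        exact mul_self_eq_zero.mp h
    intro i h1 h2
    exact key (k - i) i rfl h1 h2
  · intro h i hi
    rw [Finset.mem_Icc] at hi
    apply Finset.sum_eq_zero
    intro j hj
    rw [Finset.mem_Icc] at hj
    rcases le_or_gt j (k / 2) with hle | hgt
    · have hz : l (k + i - j) = 0 := h _ (by omega) (by omega)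
      rw [hz, mul_zero]
    · rw [h j hgt (by omega), zero_mul]
end

section
/- Let K be a field of characteristic different from 2 and let k ≥ 1 be an integer. In the field K((t)) of formal Laurent series over K, let f be a nonzero Laurent series of order exactly k (a power series vanishing to order k), let g be a Laurent series of order 0 (a power series with nonzero constant term), and let β₁ be a Laurent series of order exactly −1. Assume that t^{−k}·(f·β₁^k − g) is regular, i.e., f·β₁^k − g is a power series vanishing to order at least k. Let c, λ_1, …, λ_k ∈ K and set β := Σ_{i=1}^{k} λ_i·β₁^i. Then (1/2)·f·β² + c·g·β is regular (a formal power series) if and only if the local system of equations Σ_{j=i}^{k} λ_j·λ_{k+i−j} + 2c·λ_i = 0 holds for all i = 1, …, k. -/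
open LaurentSeries HahnSeries

namespace Stmt2Aux

variable {K : Type*} [Field K]

lemma coeff_sum {α : Type*} (s : Finset α) (F : α → LaurentSeries K) (n : ℤ) :
    (∑ a ∈ s, F a).coeff n = ∑ a ∈ s, (F a).coeff n :=
  map_sum (HahnSeries.coeff.addMonoidHom n) F s

lemma reg_mul {x y : LaurentSeries K} {d e : ℤ}
    (hx : ∀ n : ℤ, n < d → x.coeff n = 0) (hy : ∀ n : ℤ, n < e → y.coeff n = 0) :
    ∀ n : ℤ, n < d + e → (x * y).coeff n = 0 := by
  intro n hn
  rw [HahnSeries.coeff_mul]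
  apply Finset.sum_eq_zero
  rintro ⟨i, j⟩ hij
  rw [Finset.mem_addAntidiagonal] at hij
  obtain ⟨-, -, hsum⟩ := hij
  by_cases h : i < d
  · simp [hx i h]
  · have : j < e := by push_neg at h; omega
    simp [hy j this]

lemma lead_mul {x y : LaurentSeries K} {d e : ℤ}
    (hx : ∀ n : ℤ, n < d → x.coeff n = 0) (hy : ∀ n : ℤ, n < e → y.coeff n = 0) :
    (x * y).coeff (d + e) = x.coeff d * y.coeff e := by
  rw [HahnSeries.coeff_mul]
  rw [Finset.sum_eq_single ((d, e) : ℤ × ℤ)]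
  · rintro ⟨i, j⟩ hij hne
    rw [Finset.mem_addAntidiagonal] at hij
    obtain ⟨-, -, hsum⟩ := hij
    rcases lt_trichotomy i d with h | h | h
    · simp [hx i h]
    · exfalso; apply hne; subst h
      have : j = e := by omega
      subst this; rfl
    · have : j < e := by omega
      simp [hy j this]
  · intro hmem
    rw [Finset.mem_addAntidiagonal] at hmem
    push_neg at hmem
    by_cases h1 : x.coeff d = 0
    · simp [h1]
    by_cases h2 : y.coeff e = 0
    · simp [h2]
    refine absurd rfl (hmem ?_ ?_) <;> simpa [HahnSeries.mem_support]

lemma smul_mul (r : K) (x y : LaurentSeries K) : (r • x) * y = r • (x * y) := by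
  rw [← HahnSeries.C_mul_eq_smul, ← HahnSeries.C_mul_eq_smul, mul_assoc]

lemma mul_smul' (r : K) (x y : LaurentSeries K) : x * (r • y) = r • (x * y) := by
  rw [← HahnSeries.C_mul_eq_smul, ← HahnSeries.C_mul_eq_smul, mul_left_comm]

lemma smul_mul_smul' (r s : K) (x y : LaurentSeries K) :
    (r • x) * (s • y) = (r * s) • (x * y) := by
  rw [smul_mul, mul_smul', smul_smul]

end Stmt2Aux

open Stmt2Aux

/-- The central local computation in the proof of the main theorem: with
`f` of order exactly `k ≥ 1`, `g` of order `0`, `β₁` of order exactly `-1`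
in `K((t))`, and `t^{-k}·(f·β₁^k - g)` regular, the Laurent series
`(1/2)·f·β² + c·g·β` with `β = ∑_{i=1}^{k} λ_i β₁^i` is regular (a power
series) iff the local system of equations
`∑_{j=i}^{k} λ_j λ_{k+i-j} + 2 c λ_i = 0`, `i = 1, …, k`, holds. -/
theorem stmt2 (K : Type*) [Field K] (hchar : (2 : K) ≠ 0)
    (k : ℕ) (hk : 1 ≤ k)
    (f g β₁ : LaurentSeries K)
    -- `f` is a power series vanishing to order exactly `k`
    (hf₀ : ∀ n : ℤ, n < (k : ℤ) → f.coeff n = 0) (hfk : f.coeff (k : ℤ) ≠ 0)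
    -- `g` is a power series with nonzero constant term
    (hg₀ : ∀ n : ℤ, n < 0 → g.coeff n = 0) (hg : g.coeff 0 ≠ 0)
    -- `β₁` has order exactly `-1`
    (hβ₁ : ∀ n : ℤ, n < -1 → β₁.coeff n = 0) (hβ₁' : β₁.coeff (-1) ≠ 0)
    -- `t^{-k}·(f·β₁^k - g)` is regular
    (hreg : ∀ n : ℤ, n < (k : ℤ) → (f * β₁ ^ k - g).coeff n = 0)
    (c : K) (l : ℕ → K)
    (β : LaurentSeries K) (hβ : β = ∑ i ∈ Finset.Icc 1 k, l i • β₁ ^ i) :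
    (∀ n : ℤ, n < 0 → ((2 : K)⁻¹ • (f * β ^ 2) + c • (g * β)).coeff n = 0) ↔
      (∀ i ∈ Finset.Icc 1 k,
        (∑ j ∈ Finset.Icc i k, l j * l (k + i - j)) + 2 * c * l i = 0) := by
  classical
  -- powers of β₁
  have hpow : ∀ m : ℕ, (∀ n : ℤ, n < -(m : ℤ) → (β₁ ^ m).coeff n = 0) ∧
      (β₁ ^ m).coeff (-(m : ℤ)) = (β₁.coeff (-1)) ^ m := by
    intro m
    induction m with
    | zero =>
      constructor
      · intro n hn
        rw [pow_zero, HahnSeries.coeff_one, if_neg (by omega)]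
      · simp
    | succ m ih =>
      have hreg' := reg_mul ih.1 hβ₁
      constructor
      · intro n hn
        rw [pow_succ]
        refine hreg' n ?_
        push_cast at hn ⊢
        linarith
      · have hl := lead_mul ih.1 hβ₁
        have hc : (-(((m + 1 : ℕ)) : ℤ)) = -(m : ℤ) + -1 := by push_cast; ring
        rw [pow_succ, hc, hl, ih.2, pow_succ]
  -- g * β₁ ^ m
  have hgP : ∀ m : ℕ, ∀ n : ℤ, n < -(m : ℤ) → (g * β₁ ^ m).coeff n = 0 := by
    intro m n hn
    exact reg_mul hg₀ (hpow m).1 n (by omega)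
  have hgPlead : ∀ m : ℕ, (g * β₁ ^ m).coeff (-(m : ℤ)) = g.coeff 0 * (β₁.coeff (-1)) ^ m := by
    intro m
    have h := lead_mul hg₀ (hpow m).1
    rw [zero_add] at h
    rw [h, (hpow m).2]
  -- The comparison series T
  set T : LaurentSeries K := ∑ m ∈ Finset.Icc 1 k,
      ((2 : K)⁻¹ * ((∑ j ∈ Finset.Icc m k, l j * l (k + m - j)) + 2 * c * l m)) •
        (g * β₁ ^ m) with hT
  -- algebraic identities
  have e1 : f * β ^ 2 = ∑ i ∈ Finset.Icc 1 k, ∑ j ∈ Finset.Icc 1 k,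
      (l i * l j) • (f * β₁ ^ (i + j)) := by
    rw [hβ, sq, Finset.sum_mul_sum, Finset.mul_sum]
    refine Finset.sum_congr rfl fun i _ => ?_
    rw [Finset.mul_sum]
    refine Finset.sum_congr rfl fun j _ => ?_
    rw [smul_mul_smul', ← _root_.pow_add, mul_smul']
  have e2 : g * β = ∑ m ∈ Finset.Icc 1 k, l m • (g * β₁ ^ m) := by
    rw [hβ, Finset.mul_sum]
    exact Finset.sum_congr rfl fun m _ => (mul_smul' _ _ _)
  -- the reindexed double sum
  have e3 : ∑ i ∈ Finset.Icc 1 k, ∑ j ∈ Finset.Icc 1 k,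
        ((2 : K)⁻¹ * (l i * l j)) •
          (if k < i + j then g * β₁ ^ (i + j - k) else 0)
      = ∑ m ∈ Finset.Icc 1 k,
        ((2 : K)⁻¹ * (∑ j ∈ Finset.Icc m k, l j * l (k + m - j))) • (g * β₁ ^ m) := by
    have step1 : ∀ i ∈ Finset.Icc 1 k,
        (∑ j ∈ Finset.Icc 1 k, ((2 : K)⁻¹ * (l i * l j)) •
            (if k < i + j then g * β₁ ^ (i + j - k) else 0))
          = ∑ m ∈ Finset.Icc 1 i, ((2 : K)⁻¹ * (l i * l (k + m - i))) • (g * β₁ ^ m) := by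
      intro i hi
      rw [Finset.mem_Icc] at hi
      have h1 : ∀ j, ((2 : K)⁻¹ * (l i * l j)) •
          (if k < i + j then g * β₁ ^ (i + j - k) else 0)
          = if k < i + j then ((2 : K)⁻¹ * (l i * l j)) • (g * β₁ ^ (i + j - k)) else 0 := by
        intro j; split <;> simp
      simp only [h1]
      rw [← Finset.sum_filter]
      have h2 : (Finset.Icc 1 k).filter (fun j => k < i + j) = Finset.Icc (k + 1 - i) k := by
        ext j
        simp only [Finset.mem_filter, Finset.mem_Icc]
        omega
      rw [h2]
      refine Finset.sum_nbij' (fun j => i + j - k) (fun m => k + m - i) ?_ ?_ ?_ ?_ ?_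
      · intro j hj; simp only [Finset.mem_Icc] at hj ⊢; omega
      · intro m hm; simp only [Finset.mem_Icc] at hm ⊢; omega
      · intro j hj; simp only [Finset.mem_Icc] at hj ⊢; omega
      · intro m hm; simp only [Finset.mem_Icc] at hm ⊢; omega
      · intro j hj
        simp only [Finset.mem_Icc] at hj
        have hji : k + (i + j - k) - i = j := by omega
        simp only [hji]
    rw [Finset.sum_congr rfl step1]
    rw [Finset.sum_comm' (t' := Finset.Icc 1 k) (s' := fun m => Finset.Icc m k)
      (by intro i m; simp only [Finset.mem_Icc]; omega)]
    refine Finset.sum_congr rfl fun m hm => ?_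
    rw [Finset.mul_sum, Finset.sum_smul]
  -- T splits
  have e4 : T = (∑ m ∈ Finset.Icc 1 k,
        ((2 : K)⁻¹ * (∑ j ∈ Finset.Icc m k, l j * l (k + m - j))) • (g * β₁ ^ m))
      + ∑ m ∈ Finset.Icc 1 k, (c * l m) • (g * β₁ ^ m) := by
    rw [hT, ← Finset.sum_add_distrib]
    refine Finset.sum_congr rfl fun m _ => ?_
    rw [← add_smul]
    congr 1
    field_simp
  -- the key identity
  have hXT : ((2 : K)⁻¹ • (f * β ^ 2) + c • (g * β)) - T
      = ∑ i ∈ Finset.Icc 1 k, ∑ j ∈ Finset.Icc 1 k,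
        ((2 : K)⁻¹ * (l i * l j)) •
          (f * β₁ ^ (i + j) - (if k < i + j then g * β₁ ^ (i + j - k) else 0)) := by
    rw [e1, e2, e4, ← e3]
    simp only [Finset.smul_sum, smul_smul]
    rw [add_sub_add_right_eq_sub]
    rw [← Finset.sum_sub_distrib]
    refine Finset.sum_congr rfl fun i _ => ?_
    rw [← Finset.sum_sub_distrib]
    refine Finset.sum_congr rfl fun j _ => ?_
    exact (smul_sub _ _ _).symm
  -- regularity of the difference
  have hreg0 : ∀ n : ℤ, n < 0 →
      (((2 : K)⁻¹ • (f * β ^ 2) + c • (g * β)) - T).coeff n = 0 := by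
    intro n hn
    rw [hXT, Stmt2Aux.coeff_sum]
    refine Finset.sum_eq_zero fun i hi => ?_
    rw [Stmt2Aux.coeff_sum]
    refine Finset.sum_eq_zero fun j hj => ?_
    rw [Finset.mem_Icc] at hi hj
    rw [HahnSeries.coeff_smul]
    rcases le_or_gt (i + j) k with h | h
    · rw [if_neg (by omega), sub_zero]
      have := reg_mul hf₀ (hpow (i + j)).1 n (by push_cast; omega)
      rw [this, smul_zero]
    · rw [if_pos h]
      have hsplit : f * β₁ ^ (i + j) - g * β₁ ^ (i + j - k)
          = (f * β₁ ^ k - g) * β₁ ^ (i + j - k) := by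
        rw [sub_mul, mul_assoc, ← _root_.pow_add]
        congr 3
        omega
      rw [hsplit]
      have := reg_mul hreg (hpow (i + j - k)).1 n (by push_cast; omega)
      rw [this, smul_zero]
  have hiff : (∀ n : ℤ, n < 0 → ((2 : K)⁻¹ • (f * β ^ 2) + c • (g * β)).coeff n = 0)
      ↔ (∀ n : ℤ, n < 0 → T.coeff n = 0) := by
    constructor
    · intro h n hn
      have h0 := hreg0 n hn
      rw [HahnSeries.coeff_sub, h n hn, zero_sub, neg_eq_zero] at h0
      exact h0
    · intro h n hn
      have h0 := hreg0 n hn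
      rw [HahnSeries.coeff_sub, h n hn, sub_zero] at h0
      exact h0
  rw [hiff]
  -- Now the triangular argument on T
  constructor
  · intro hT0
    have key : ∀ d : ℕ, ∀ m : ℕ, 1 ≤ m → m ≤ k → k - m < d →
        (∑ j ∈ Finset.Icc m k, l j * l (k + m - j)) + 2 * c * l m = 0 := by
      intro d
      induction d with
      | zero => intro m _ _ h3; omega
      | succ d ih =>
        intro m h1 h2 h3
        have hneg : -(m : ℤ) < 0 := by omega
        have h0 := hT0 (-(m : ℤ)) hneg
        have hm' : m ∈ Finset.Icc 1 k := Finset.mem_Icc.mpr ⟨h1, h2⟩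
        have hsum : ∑ j ∈ Finset.Icc 1 k,
            (((2 : K)⁻¹ * ((∑ j' ∈ Finset.Icc j k, l j' * l (k + j - j')) + 2 * c * l j)) •
              (g * β₁ ^ j)).coeff (-(m : ℤ))
            = (((2 : K)⁻¹ * ((∑ j' ∈ Finset.Icc m k, l j' * l (k + m - j')) + 2 * c * l m)) •
              (g * β₁ ^ m)).coeff (-(m : ℤ)) := by
          refine Finset.sum_eq_single_of_mem m hm' fun j hj hne => ?_
          rw [Finset.mem_Icc] at hj
          rcases lt_or_gt_of_ne hne with hlt | hgt
          · rw [HahnSeries.coeff_smul, hgP j (-(m : ℤ)) (by omega), smul_zero]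
          · have hSj := ih j (by omega) (by omega) (by omega)
            rw [HahnSeries.coeff_smul, hSj, mul_zero, zero_smul]
        rw [hT, Stmt2Aux.coeff_sum, hsum, HahnSeries.coeff_smul, smul_eq_mul, hgPlead m] at h0
        have hb : (β₁.coeff (-1)) ^ m ≠ 0 := pow_ne_zero _ hβ₁'
        have h2' : (2 : K)⁻¹ ≠ 0 := inv_ne_zero hchar
        rcases mul_eq_zero.mp h0 with h | h
        · rcases mul_eq_zero.mp h with h' | h'
          · exact absurd h' h2'
          · exact h'
        · rcases mul_eq_zero.mp h with h' | h'
          · exact absurd h' hg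
          · exact absurd h' hb
    intro i hi
    rw [Finset.mem_Icc] at hi
    exact key (k + 1) i hi.1 hi.2 (by omega)
  · intro hsys n hn
    rw [hT, Stmt2Aux.coeff_sum]
    refine Finset.sum_eq_zero fun m hm => ?_
    rw [hsys m hm, mul_zero, zero_smul, HahnSeries.coeff_zero]
end

section
/- Let K be a field and let k ≥ 1 be an integer such that k·1 ≠ 0 in K (the characteristic of K does not divide k). Let F be a formal Laurent series over K of order exactly −k whose leading coefficient (the coefficient of t^{−k}) equals 1. Then there exists a Laurent series β over K of order exactly −1 such that β^k − F is regular, i.e., β^k and F have the same principal part. -/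
open LaurentSeries HahnSeries

open PowerSeries in
private lemma stmt3_coeff_lt {K : Type*} [CommRing K] (h : K⟦X⟧) (c : K) (k m n : ℕ)
    (hn : n < m) :
    PowerSeries.coeff n ((h + PowerSeries.C c * X ^ m) ^ k) =
      PowerSeries.coeff n (h ^ k) := by
  rw [add_comm h, add_pow, map_sum, Finset.sum_eq_single 0]
  · simp
  · intro i _ hi
    have hrw : (PowerSeries.C c * X ^ m) ^ i * h ^ (k - i) * (k.choose i : K⟦X⟧)
        = PowerSeries.C (c ^ i) * (X ^ (m * i) * (h ^ (k - i) * (k.choose i : K⟦X⟧))) := by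
      rw [mul_pow, ← map_pow, ← pow_mul]; ring
    rw [hrw, PowerSeries.coeff_C_mul, PowerSeries.coeff_X_pow_mul', if_neg, mul_zero]
    have : 1 ≤ i := Nat.one_le_iff_ne_zero.mpr hi
    have : m ≤ m * i := Nat.le_mul_of_pos_right m this
    omega
  · intro habs
    exact absurd (Finset.mem_range.mpr (Nat.succ_pos k)) habs

open PowerSeries in
private lemma stmt3_coeff_eq {K : Type*} [CommRing K] (h : K⟦X⟧) (c : K) (k m : ℕ)
    (hm : 0 < m) :
    PowerSeries.coeff m ((h + PowerSeries.C c * X ^ m) ^ k) =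
      PowerSeries.coeff m (h ^ k)
        + (k : K) * c * PowerSeries.constantCoeff (h ^ (k - 1)) := by
  rcases k with _ | k'
  · simp
  rw [add_comm h, add_pow, map_sum, Finset.sum_range_succ', Finset.sum_range_succ']
  have hzero : ∀ i ∈ Finset.range k', PowerSeries.coeff m
      ((PowerSeries.C c * X ^ m) ^ (i + 1 + 1) * h ^ (k' + 1 - (i + 1 + 1))
        * ((k' + 1).choose (i + 1 + 1) : K⟦X⟧)) = 0 := by
    intro i _
    have hrw : (PowerSeries.C c * X ^ m) ^ (i + 1 + 1) * h ^ (k' + 1 - (i + 1 + 1))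
          * ((k' + 1).choose (i + 1 + 1) : K⟦X⟧)
        = PowerSeries.C (c ^ (i + 1 + 1)) * (X ^ (m * (i + 1 + 1))
          * (h ^ (k' + 1 - (i + 1 + 1)) * ((k' + 1).choose (i + 1 + 1) : K⟦X⟧))) := by
      rw [mul_pow, ← map_pow, ← pow_mul]; ring
    rw [hrw, PowerSeries.coeff_C_mul, PowerSeries.coeff_X_pow_mul', if_neg, mul_zero]
    have : m * 2 ≤ m * (i + 1 + 1) := Nat.mul_le_mul_left m (by omega)
    omega
  rw [Finset.sum_eq_zero hzero]
  have h1 : PowerSeries.coeff m ((PowerSeries.C c * X ^ m) ^ (0 + 1)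
        * h ^ (k' + 1 - (0 + 1)) * ((k' + 1).choose (0 + 1) : K⟦X⟧))
      = (↑(k' + 1) : K) * c * PowerSeries.constantCoeff (h ^ (k' + 1 - 1)) := by
    have hrw : (PowerSeries.C c * X ^ m) ^ (0 + 1) * h ^ (k' + 1 - (0 + 1))
          * ((k' + 1).choose (0 + 1) : K⟦X⟧)
        = PowerSeries.C c * (X ^ m * (h ^ k' * ((k' + 1) : K⟦X⟧))) := by
      simp [Nat.choose_one_right]; ring
    rw [hrw, PowerSeries.coeff_C_mul, PowerSeries.coeff_X_pow_mul', if_pos le_rfl,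
      Nat.sub_self, PowerSeries.coeff_zero_eq_constantCoeff, map_mul]
    simp
    ring
  rw [h1]
  simp only [pow_zero, one_mul, Nat.sub_zero, Nat.choose_zero_right, Nat.cast_one, mul_one,
    zero_add]
  ring

open PowerSeries in
private lemma stmt3_root {K : Type*} [Field K] (k : ℕ) (hchar : (k : K) ≠ 0) (g : ℕ → K)
    (j : ℕ) :
    ∃ h : K⟦X⟧, PowerSeries.constantCoeff h = 1 ∧
      ∀ i : ℕ, 0 < i → i ≤ j → PowerSeries.coeff i (h ^ k) = g i := by
  induction j with
  | zero => exact ⟨1, by simp, fun i hi hij => absurd (hij.trans_lt hi) (lt_irrefl _)⟩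
  | succ j ih =>
    obtain ⟨h, h1, h2⟩ := ih
    have hcc : PowerSeries.constantCoeff (h ^ (k - 1)) = 1 := by
      rw [map_pow, h1, one_pow]
    set c : K := (g (j + 1) - PowerSeries.coeff (j + 1) (h ^ k)) / (k : K) with hc
    refine ⟨h + PowerSeries.C c * X ^ (j + 1), ?_, ?_⟩
    · simp [h1]
    · intro i hi hij
      rcases lt_or_eq_of_le hij with hlt | heq
      · rw [stmt3_coeff_lt h c k (j + 1) i hlt]
        exact h2 i hi (by omega)
      · subst heq
        rw [stmt3_coeff_eq h c k _ hi, hcc, mul_one, hc, mul_div_cancel₀ _ hchar]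
        ring

/-- The Claim in the proof of the main theorem: if the characteristic of `K`
does not divide `k ≥ 1`, and `F ∈ K((t))` has order exactly `-k` with leading
coefficient `1`, then there is a Laurent series `β` of order exactly `-1`
such that `β^k - F` is regular, i.e. `β^k` and `F` have the same principal
part. -/
theorem stmt3 (K : Type*) [Field K] (k : ℕ) (hk : 1 ≤ k) (hchar : (k : K) ≠ 0)
    (F : LaurentSeries K)
    (hF₀ : ∀ n : ℤ, n < -(k : ℤ) → F.coeff n = 0) (hFk : F.coeff (-(k : ℤ)) = 1) :
    ∃ β : LaurentSeries K,
      (∀ n : ℤ, n < -1 → β.coeff n = 0) ∧ β.coeff (-1) ≠ 0 ∧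
        (∀ n : ℤ, n < 0 → (β ^ k - F).coeff n = 0) := by
  set g : ℕ → K := fun i => F.coeff ((i : ℤ) - k) with hg
  obtain ⟨h, h1, h2⟩ := stmt3_root k hchar g k
  set β : LaurentSeries K := single (-1 : ℤ) 1 * (HahnSeries.ofPowerSeries ℤ K h) with hβ
  have hβcoeff : ∀ n : ℤ, β.coeff n = ((HahnSeries.ofPowerSeries ℤ K h)).coeff (n + 1) := by
    intro n
    have := HahnSeries.coeff_single_mul_add (r := (1 : K))
      (x := HahnSeries.ofPowerSeries ℤ K h) (a := n + 1) (b := (-1 : ℤ))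
    rw [show (n + 1) + (-1 : ℤ) = n by ring] at this
    rw [hβ, this, one_mul]
  have hβk : ∀ n : ℤ, (β ^ k).coeff n =
      ((HahnSeries.ofPowerSeries ℤ K (h ^ k))).coeff (n + k) := by
    intro n
    have hpow : β ^ k = single (-(k : ℤ)) 1 * HahnSeries.ofPowerSeries ℤ K (h ^ k) := by
      rw [hβ, mul_pow, single_pow, one_pow, map_pow]
      congr 1
      simp
    have := HahnSeries.coeff_single_mul_add (r := (1 : K))
      (x := HahnSeries.ofPowerSeries ℤ K (h ^ k)) (a := n + k) (b := (-(k : ℤ)))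
    rw [show (n + k) + (-(k : ℤ)) = n by ring] at this
    rw [hpow, this, one_mul]
  refine ⟨β, ?_, ?_, ?_⟩
  · intro n hn
    rw [hβcoeff, PowerSeries.coeff_coe, if_pos (by omega)]
  · rw [hβcoeff]
    norm_num
    rw [PowerSeries.coeff_coe, if_neg (by norm_num)]
    simp only [Int.natAbs_zero]
    rw [PowerSeries.coeff_zero_eq_constantCoeff, h1]
    exact one_ne_zero
  · intro n hn
    rw [HahnSeries.coeff_sub, hβk]
    rcases lt_or_ge n (-(k : ℤ)) with hlt | hge
    · rw [hF₀ n hlt, PowerSeries.coeff_coe, if_pos (by omega), sub_zero]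
    · -- -k ≤ n < 0
      set i : ℕ := (n + k).toNat with hi
      have hiℤ : (i : ℤ) = n + k := Int.toNat_of_nonneg (by omega)
      rw [PowerSeries.coeff_coe, if_neg (by omega)]
      have hnatAbs : (n + k).natAbs = i := by omega
      rw [hnatAbs]
      rcases Nat.eq_zero_or_pos i with hz | hpos
      · have hnk : n = -(k : ℤ) := by omega
        rw [hz, hnk, hFk, PowerSeries.coeff_zero_eq_constantCoeff, map_pow, h1, one_pow,
          sub_self]
      · have hik : i ≤ k := by omega
        rw [h2 i hpos hik, hg]
        simp only
        rw [show (i : ℤ) - k = n by omega, sub_self]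
end

section
/- For every integer d ≥ 3, the following identity holds in ℤ: 1 − (1 + Σ_{i=1}^{d−2} (−1)^i · Σ_{j=1}^{i} binom(d−1, i+1)·(1 − 3j)·C(d−3−i−j, d−2)) = (3(d−1)(d−2) − 4)·2^{d−3} + 2, where binom(d−1, i+1) is the usual binomial coefficient and C(m, r) for an integer m (possibly negative) and natural number r denotes the integer-valued binomial coefficient m(m−1)⋯(m−r+1)/r! (Mathlib's Ring.choose on ℤ). -/
open Polynomial Finset

/-! ### Auxiliary lemmas -/

private lemma rchoose_neg' (a r : ℕ) :
    Ring.choose (-(a:ℤ) - 1) r = (-1)^r * ((a + r).choose r : ℤ) := by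
  have key := Ring.descPochhammer_eq_factorial_smul_choose (R := ℤ) (-(a:ℤ) - 1) r
  rw [← Polynomial.eval_eq_smeval, descPochhammer_eval_eq_ascPochhammer,
    show (-(a:ℤ) - 1 - r + 1) = -((a + r : ℕ) : ℤ) by push_cast; ring,
    ascPochhammer_eval_neg_eq_descPochhammer,
    descPochhammer_eval_eq_descFactorial,
    Nat.descFactorial_eq_factorial_mul_choose, nsmul_eq_mul] at key
  have hfac : ((r.factorial : ℤ)) ≠ 0 := by exact_mod_cast r.factorial_ne_zero
  apply mul_left_cancel₀ hfac
  rw [← key]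
  push_cast
  ring

private lemma rchoose_eq' (n i j : ℕ) :
    Ring.choose ((n:ℤ) - 1 - i - j) n = (-1)^n * ((i+j).choose n : ℤ) := by
  rcases le_or_gt n (i+j) with h | h
  · rw [show ((n:ℤ) - 1 - i - j) = -((i+j-n : ℕ) : ℤ) - 1 by omega, rchoose_neg',
      show (i+j-n) + n = i + j by omega]
  · rw [show ((n:ℤ) - 1 - i - j) = ((n-1-i-j : ℕ) : ℤ) by omega, Ring.choose_natCast,
      Nat.choose_eq_zero_of_lt (by omega), Nat.choose_eq_zero_of_lt h]
    simp

private lemma sum_Icc_one' {M : Type*} [AddCommMonoid M] (f : ℕ → M) (n : ℕ) :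
    ∑ i ∈ Icc 1 n, f i = ∑ i ∈ range n, f (i+1) := by
  induction n with
  | zero => simp
  | succ n ih => rw [Finset.sum_Icc_succ_top (by omega), ih, Finset.sum_range_succ]

private lemma geomInnerSum' (i : ℕ) :
    (X:ℤ[X])^2 * ∑ j ∈ Icc 1 i, (1 - 3*(j:ℤ[X])) * (X+1)^j
      = X*(X+1)^(i+1) + (3*(i:ℤ[X])+3)*(X+1)^(i+1) - 3*(i:ℤ[X])*(X+1)^(i+2)
        - X*(X+1) - 3*(X+1) := by
  induction i with
  | zero => simp
  | succ i ih =>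
    rw [Finset.sum_Icc_succ_top (by omega), mul_add, ih]
    push_cast
    ring

section BinomSums

variable {R : Type*} [CommRing R]

private lemma binom_sum' (m : ℕ) (t : R) :
    ∑ k ∈ range (m+1), (-1)^k * (m.choose k : R) * t^k = (1-t)^m := by
  have h := add_pow (-t) 1 m
  rw [show (-t + 1 : R) = 1 - t by ring] at h
  rw [h]
  refine Finset.sum_congr rfl fun k _ => ?_
  rw [neg_pow]
  ring

private lemma binom_sum_A' (n : ℕ) (t : R) :
    ∑ i ∈ Icc 1 n, (-1)^i * ((n+1).choose (i+1) : R) * t^(i+1)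
      = 1 - ((n:R)+1)*t - (1-t)^(n+1) := by
  have h := binom_sum' (n+1) t
  rw [Finset.sum_range_succ', Finset.sum_range_succ'] at h
  simp only [Nat.choose_zero_right, Nat.choose_one_right, pow_zero, pow_one, Nat.cast_one,
    mul_one, one_mul] at h
  rw [sum_Icc_one']
  have h2 : ∑ i ∈ range n, (-1:R)^(i+1) * ((n+1).choose (i+1+1) : R) * t^(i+1+1)
      = - ∑ i ∈ range n, (-1:R)^(i+1+1) * ((n+1).choose (i+1+1) : R) * t^(i+1+1) := by
    rw [← Finset.sum_neg_distrib]
    exact Finset.sum_congr rfl fun i _ => by ring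
  rw [h2]
  push_cast [Nat.choose_one_right] at h ⊢
  linear_combination -h

private lemma binom_sum_B' (n : ℕ) (t : R) :
    ∑ i ∈ range (n+1), (-1)^i * ((n+1).choose (i+1) : R) * ((i:R)+1) * t^(i+1)
      = ((n:R)+1)*t*(1-t)^n := by
  have key : ∀ i : ℕ, (((n+1).choose (i+1) : R) * ((i:R)+1)) = ((n:R)+1) * (n.choose i : R) := by
    intro i
    have := Nat.add_one_mul_choose_eq n i
    have h2 : ((n+1) * n.choose i : ℕ) = ((n+1).choose (i+1) * (i+1) : ℕ) := by
      simpa [Nat.succ_eq_add_one] using this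
    have := congrArg (Nat.cast : ℕ → R) h2
    push_cast at this
    linear_combination -this
  calc ∑ i ∈ range (n+1), (-1)^i * ((n+1).choose (i+1) : R) * ((i:R)+1) * t^(i+1)
      = ∑ i ∈ range (n+1), ((n:R)+1) * t * ((-1)^i * (n.choose i : R) * t^i) := by
        refine Finset.sum_congr rfl fun i _ => ?_
        rw [show (-1:R)^i * ((n+1).choose (i+1) : R) * ((i:R)+1) * t^(i+1)
            = ((n+1).choose (i+1) : R) * ((i:R)+1) * ((-1)^i * t^(i+1)) by ring, key i]
        ring
    _ = ((n:R)+1)*t*(1-t)^n := by rw [← Finset.mul_sum, binom_sum']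

private lemma binom_sum_C' (n : ℕ) (t : R) :
    ∑ i ∈ Icc 1 n, (-1)^i * ((n+1).choose (i+1) : R) * (i:R) * t^(i+1)
      = ((n:R)+1)*t*(1-t)^n + (1-t)^(n+1) - 1 := by
  have hsplit : ∑ i ∈ Icc 1 n, (-1:R)^i * ((n+1).choose (i+1) : R) * (i:R) * t^(i+1)
      = ∑ i ∈ Icc 1 n, ((-1:R)^i * ((n+1).choose (i+1) : R) * ((i:R)+1) * t^(i+1)
        - (-1)^i * ((n+1).choose (i+1) : R) * t^(i+1)) :=
    Finset.sum_congr rfl fun i _ => by ring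
  rw [hsplit, Finset.sum_sub_distrib, binom_sum_A']
  have hB := binom_sum_B' n t
  rw [Finset.sum_range_succ'] at hB
  rw [sum_Icc_one']
  push_cast [Nat.choose_one_right] at hB ⊢
  linear_combination hB

end BinomSums

private lemma main_id' (n : ℕ) :
    (X+1) * ((X:ℤ[X])^2 * ∑ i ∈ Icc 1 n, (-1)^i * ((n+1).choose (i+1) : ℤ[X]) *
        ∑ j ∈ Icc 1 i, (1 - 3*(j:ℤ[X])) * (X+1)^(i+j))
    = -X^2 + (-1)^n * X^(n+1) *
        ((4*X+3)*(X+2)^(n+1) - 3*((n:ℤ[X])+1)*(X+1)^2*(X+2)^n - (X+3)*(X+1)) := by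
  have step1 : ∀ i : ℕ, (X+1) * ((X:ℤ[X])^2 * ((-1)^i * ((n+1).choose (i+1) : ℤ[X]) *
        ∑ j ∈ Icc 1 i, (1 - 3*(j:ℤ[X])) * (X+1)^(i+j)))
      = (X+3) * ((-1)^i * ((n+1).choose (i+1) : ℤ[X]) * ((X+1)^2)^(i+1))
        - 3*X * ((-1)^i * ((n+1).choose (i+1) : ℤ[X]) * (i:ℤ[X]) * ((X+1)^2)^(i+1))
        - (X+3)*(X+1) * ((-1)^i * ((n+1).choose (i+1) : ℤ[X]) * (X+1)^(i+1)) := by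
    intro i
    have hfac : ∑ j ∈ Icc 1 i, (1 - 3*(j:ℤ[X])) * (X+1)^(i+j)
        = (X+1)^i * ∑ j ∈ Icc 1 i, (1 - 3*(j:ℤ[X])) * (X+1)^j := by
      rw [Finset.mul_sum]
      exact Finset.sum_congr rfl fun j _ => by rw [pow_add]; ring
    have h3 := geomInnerSum' i
    calc (X+1) * ((X:ℤ[X])^2 * ((-1)^i * ((n+1).choose (i+1) : ℤ[X]) *
            ∑ j ∈ Icc 1 i, (1 - 3*(j:ℤ[X])) * (X+1)^(i+j)))
        = (-1)^i * ((n+1).choose (i+1) : ℤ[X]) * ((X+1)^(i+1) *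
            ((X:ℤ[X])^2 * ∑ j ∈ Icc 1 i, (1 - 3*(j:ℤ[X])) * (X+1)^j)) := by
          rw [hfac]; ring
      _ = _ := by rw [h3, ← pow_mul]; ring
  rw [Finset.mul_sum, Finset.mul_sum,
    Finset.sum_congr rfl (fun i _ => step1 i), Finset.sum_sub_distrib,
    Finset.sum_sub_distrib, ← Finset.mul_sum, ← Finset.mul_sum, ← Finset.mul_sum,
    binom_sum_A' n ((X+1)^2), binom_sum_C' n ((X+1)^2), binom_sum_A' n (X+1),
    show ((1:ℤ[X]) - (X+1)^2) = -(X*(X+2)) by ring,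
    show ((1:ℤ[X]) - (X+1)) = -X by ring,
    neg_pow (X*(X+2) : ℤ[X]) (n+1), neg_pow (X*(X+2) : ℤ[X]) n, neg_pow (X:ℤ[X]) (n+1),
    mul_pow, mul_pow]
  ring

private lemma alt_coeff' (q : ℤ[X]) (N : ℕ) :
    ∑ t ∈ range (N+1), (-1)^t * ((X+1) * q).coeff t = (-1)^N * q.coeff N := by
  induction N with
  | zero => simp [Polynomial.mul_coeff_zero]
  | succ N ih =>
    rw [Finset.sum_range_succ, ih, show ((X+1) * q : ℤ[X]) = X*q + q by ring,
      Polynomial.coeff_add, Polynomial.coeff_X_mul]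
    ring

private lemma coeff_F' (n : ℕ) :
    (∑ i ∈ Icc 1 n, (-1)^i * ((n+1).choose (i+1) : ℤ[X]) *
        ∑ j ∈ Icc 1 i, (1 - 3*(j:ℤ[X])) * (X+1)^(i+j)).coeff n
    = ∑ i ∈ Icc 1 n, (-1)^i * ∑ j ∈ Icc 1 i,
        ((n+1).choose (i+1) : ℤ) * (1-3*(j:ℤ)) * ((i+j).choose n : ℤ) := by
  rw [Polynomial.finset_sum_coeff]
  refine Finset.sum_congr rfl fun i _ => ?_
  rw [Finset.mul_sum, Polynomial.finset_sum_coeff, Finset.mul_sum]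
  refine Finset.sum_congr rfl fun j _ => ?_
  have hc : ((-1:ℤ[X])^i * ((n+1).choose (i+1) : ℤ[X]) * ((1 - 3*(j:ℤ[X])) * (X+1)^(i+j)))
      = Polynomial.C ((-1)^i * ((n+1).choose (i+1) : ℤ) * (1 - 3*(j:ℤ))) * (X+1)^(i+j) := by
    simp only [map_mul, map_sub, map_pow, map_neg, map_one, map_natCast, map_ofNat]
    ring
  rw [hc, Polynomial.coeff_C_mul, Polynomial.coeff_X_add_one_pow]
  ring

private lemma coeff_one_mul' (p q : ℤ[X]) :
    (p*q).coeff 1 = p.coeff 0 * q.coeff 1 + p.coeff 1 * q.coeff 0 := by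
  rw [Polynomial.coeff_mul, Finset.Nat.sum_antidiagonal_eq_sum_range_succ_mk]
  simp [Finset.sum_range_succ]

private lemma coeff_X2_pow_zero' (m : ℕ) : ((X+2:ℤ[X])^m).coeff 0 = 2^m := by
  rw [show (X+2:ℤ[X]) = X + C 2 by simp, Polynomial.coeff_X_add_C_pow]
  simp

private lemma coeff_X2_pow_one' (m : ℕ) : ((X+2:ℤ[X])^m).coeff 1 = (m:ℤ) * 2^(m-1) := by
  rw [show (X+2:ℤ[X]) = X + C 2 by simp, Polynomial.coeff_X_add_C_pow]
  simp [mul_comm]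

private lemma M_coeff_zero' (n : ℕ) :
    (((4*X+3)*(X+2)^(n+1) - 3*((n:ℤ[X])+1)*(X+1)^2*(X+2)^n - (X+3)*(X+1)) : ℤ[X]).coeff 0
    = 3*2^(n+1) - 3*((n:ℤ)+1)*2^n - 3 := by
  simp only [Polynomial.coeff_sub, Polynomial.mul_coeff_zero, coeff_X2_pow_zero']
  norm_num [Polynomial.coeff_X_add_one_pow]

private lemma M_coeff_one' (k : ℕ) :
    (((4*X+3)*(X+2)^(k+1+1) - 3*(((k+1:ℕ):ℤ[X])+1)*(X+1)^2*(X+2)^(k+1) - (X+3)*(X+1)) : ℤ[X]).coeff 1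
    = 4*2^(k+2) + 3*((k:ℤ)+2)*2^(k+1) - 3*((k:ℤ)+2)*(((k:ℤ)+1)*2^k + 2*2^(k+1)) - 4 := by
  simp only [Polynomial.coeff_sub]
  rw [coeff_one_mul' (4*X+3) ((X+2)^(k+2)),
    show ((3:ℤ[X])*((((k+1:ℕ):ℤ[X])+1))*(X+1)^2*(X+2)^(k+1))
      = (3*((((k+1:ℕ):ℤ[X])+1))*(X+1)^2)*(X+2)^(k+1) by ring,
    coeff_one_mul' (3*((((k+1:ℕ):ℤ[X])+1))*(X+1)^2) ((X+2)^(k+1)),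
    coeff_one_mul' (X+3) (X+1), coeff_X2_pow_zero', coeff_X2_pow_zero',
    coeff_X2_pow_one', coeff_X2_pow_one',
    show ((3:ℤ[X])*((((k+1:ℕ):ℤ[X])+1))*(X+1)^2) = (3*((((k+1:ℕ):ℤ[X])+1)))*(X+1)^2 by ring,
    Polynomial.mul_coeff_zero, coeff_one_mul' (3*((((k+1:ℕ):ℤ[X])+1))) ((X+1)^2)]
  norm_num [Polynomial.coeff_X_add_one_pow, Polynomial.coeff_one]
  ring

/-- The genus computation for the osculating cone (Section 2): for `d ≥ 3`,
`1 - (1 + ∑_{i=1}^{d-2} (-1)^i ∑_{j=1}^{i} binom(d-1, i+1)·(1-3j)·C(d-3-i-j, d-2))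
  = (3(d-1)(d-2) - 4)·2^{d-3} + 2`,
where `C(m, r)` is the integer-valued generalized binomial coefficient
(`Ring.choose` on `ℤ`). -/
theorem stmt7 (d : ℕ) (hd : 3 ≤ d) :
    1 - (1 + ∑ i ∈ Finset.Icc 1 (d - 2), (-1 : ℤ) ^ i *
        ∑ j ∈ Finset.Icc 1 i, ((d - 1).choose (i + 1) : ℤ) * (1 - 3 * (j : ℤ)) *
          Ring.choose ((d : ℤ) - 3 - (i : ℤ) - (j : ℤ)) (d - 2)) =
      (3 * ((d : ℤ) - 1) * ((d : ℤ) - 2) - 4) * 2 ^ (d - 3) + 2 := by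
  obtain ⟨k, rfl⟩ : ∃ k, d = k + 3 := ⟨d - 3, by omega⟩
  rw [show k + 3 - 2 = k + 1 by omega, show k + 3 - 1 = (k+1) + 1 by omega,
    show k + 3 - 3 = k by omega]
  -- Step 1: replace Ring.choose by ordinary binomial coefficients
  have hS : ∑ i ∈ Icc 1 (k+1), (-1 : ℤ) ^ i *
        ∑ j ∈ Icc 1 i, (((k+1)+1).choose (i + 1) : ℤ) * (1 - 3 * (j : ℤ)) *
          Ring.choose (((k+3 : ℕ) : ℤ) - 3 - (i : ℤ) - (j : ℤ)) (k+1)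
      = (-1)^(k+1) * ∑ i ∈ Icc 1 (k+1), (-1 : ℤ) ^ i *
        ∑ j ∈ Icc 1 i, (((k+1)+1).choose (i + 1) : ℤ) * (1 - 3 * (j : ℤ)) *
          ((i+j).choose (k+1) : ℤ) := by
    rw [Finset.mul_sum]
    refine Finset.sum_congr rfl fun i _ => ?_
    have hin : ∑ j ∈ Icc 1 i, (((k+1)+1).choose (i + 1) : ℤ) * (1 - 3 * (j : ℤ)) *
          Ring.choose (((k+3 : ℕ) : ℤ) - 3 - (i : ℤ) - (j : ℤ)) (k+1)
        = ∑ j ∈ Icc 1 i, (-1:ℤ)^(k+1) * ((((k+1)+1).choose (i + 1) : ℤ) * (1 - 3 * (j : ℤ)) *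
            ((i+j).choose (k+1) : ℤ)) := by
      refine Finset.sum_congr rfl fun j _ => ?_
      rw [show (((k+3 : ℕ) : ℤ) - 3 - (i : ℤ) - (j : ℤ)) = (((k+1:ℕ):ℤ) - 1 - i - j) by
          push_cast; ring, rchoose_eq']
      ring
    rw [hin, ← Finset.mul_sum]
    ring
  rw [hS]
  set Fp : ℤ[X] := ∑ i ∈ Icc 1 (k+1), (-1)^i * (((k+1)+1).choose (i+1) : ℤ[X]) *
        ∑ j ∈ Icc 1 i, (1 - 3*(j:ℤ[X])) * (X+1)^(i+j) with hFp
  set Mp : ℤ[X] := (4*X+3)*(X+2)^((k+1)+1) - 3*(((k+1:ℕ):ℤ[X])+1)*(X+1)^2*(X+2)^(k+1)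
      - (X+3)*(X+1) with hMp
  -- Step 2: identify the inner double sum as a coefficient of F
  have hT := coeff_F' (k+1)
  rw [← hFp] at hT
  rw [← hT]
  -- Step 3: compute the coefficient via the closed polynomial identity
  have hmain := main_id' (k+1)
  rw [← hFp, ← hMp] at hmain
  have halt := alt_coeff' ((X:ℤ[X])^2 * Fp) ((k+1)+2)
  rw [hmain, Polynomial.coeff_X_pow_mul Fp 2 (k+1)] at halt
  -- Step 4: evaluate the alternating sum of coefficients of the closed form
  have hsplit : ∀ t : ℕ, (-1:ℤ)^t * ((-X^2 + (-1)^(k+1) * X^((k+1)+1) * Mp : ℤ[X]).coeff t)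
      = (-1)^t * (-(X^2:ℤ[X]).coeff t) + (-1)^t * ((-1)^(k+1) * ((X^((k+1)+1)*Mp).coeff t)) := by
    intro t
    have hc : ((-1:ℤ[X])^(k+1) * X^((k+1)+1) * Mp) = C ((-1:ℤ)^(k+1)) * (X^((k+1)+1) * Mp) := by
      simp only [map_pow, map_neg, map_one]
      ring
    rw [Polynomial.coeff_add, Polynomial.coeff_neg, hc, Polynomial.coeff_C_mul]
    ring
  rw [Finset.sum_congr rfl (fun t _ => hsplit t), Finset.sum_add_distrib] at halt
  have h1 : ∑ t ∈ range ((k+1)+2+1), (-1:ℤ)^t * (-(X^2:ℤ[X]).coeff t) = -1 := by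
    rw [Finset.sum_eq_single 2]
    · simp [Polynomial.coeff_X_pow]
    · intro b _ hb
      simp [Polynomial.coeff_X_pow, hb]
    · intro h
      exact absurd (Finset.mem_range.mpr (by omega)) h
  have h2 : ∑ t ∈ range ((k+1)+2+1), (-1:ℤ)^t * ((-1:ℤ)^(k+1) * ((X^((k+1)+1)*Mp).coeff t))
      = Mp.coeff 1 - Mp.coeff 0 := by
    rw [Finset.sum_range_succ, Finset.sum_range_succ]
    have hz : ∑ t ∈ range ((k+1)+1), (-1:ℤ)^t * ((-1:ℤ)^(k+1) * ((X^((k+1)+1)*Mp).coeff t))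
        = 0 := by
      refine Finset.sum_eq_zero fun t ht => ?_
      rw [Polynomial.coeff_X_pow_mul' Mp ((k+1)+1) t, if_neg (by
        simp only [Finset.mem_range] at ht; omega)]
      ring
    rw [hz, Polynomial.coeff_X_pow_mul' Mp ((k+1)+1) ((k+1)+1),
      Polynomial.coeff_X_pow_mul' Mp ((k+1)+1) ((k+1)+2), if_pos le_rfl,
      if_pos (by omega), show (k+1)+1 - ((k+1)+1) = 0 by omega,
      show (k+1)+2 - ((k+1)+1) = 1 by omega]
    have e1 : (-1:ℤ)^((k+1)+1) * (-1:ℤ)^(k+1) = -1 := by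
      rw [← pow_add]
      exact Odd.neg_one_pow ⟨k+1, by ring⟩
    have e2 : (-1:ℤ)^((k+1)+2) * (-1:ℤ)^(k+1) = 1 := by
      rw [← pow_add]
      exact Even.neg_one_pow ⟨k+2, by ring⟩
    linear_combination Mp.coeff 0 * e1 + Mp.coeff 1 * e2
  rw [h1, h2] at halt
  -- Step 5: conclude
  have hV : (-1:ℤ)^(k+1) * Fp.coeff (k+1) = -1 + (Mp.coeff 1 - Mp.coeff 0) := by
    linear_combination -halt
  rw [hV, M_coeff_one' k]
  have hM0 := M_coeff_zero' (k+1)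
  rw [← hMp] at hM0
  rw [hM0]
  push_cast
  ring
end
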